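/- If W : ℝ → (0,∞) is even, measurable, and satisfies ∬ |ln W(λ₁) − ln W(λ₂)|²/(λ₁−λ₂)² dλ₁ dλ₂ < ∞ over ℝ×ℝ, then ∫₀^∞ |ln W(2λ) − ln W(λ)|² (dλ/λ) < ∞. -/

import Mathlib

open MeasureTheory Set ENNReal

theorem dyadic_dilation_integral_finite (W : ℝ → ℝ)
    (hW : Measurable W) (hpos : ∀ x, 0 < W x) (heven : ∀ x, W (-x) = W x)
    (hfin : (∫⁻ l1 : ℝ, ∫⁻ l2 : ℝ,
        ENNReal.ofReal ((Real.log (W l1) - Real.log (W l2))^2 / (l1 - l2)^2)) < ⊤) :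
    (∫⁻ l in Ioi (0:ℝ),
        ENNReal.ofReal ((Real.log (W (2 * l)) - Real.log (W l))^2 / l)) < ⊤ := by
  set f : ℝ → ℝ := fun x => Real.log (W x) with hf_def
  have hf : Measurable f := by rw [hf_def]; exact Real.measurable_log.comp hW
  have hfx : ∀ x, Real.log (W x) = f x := fun x => by rw [hf_def]
  simp only [hfx] at hfin ⊢
  clear_value f
  set G : ℝ → ℝ → ℝ≥0∞ :=
    fun a b => ENNReal.ofReal ((f a - f b)^2 / (a - b)^2) with hG_def
  have hGm : Measurable (fun p : ℝ × ℝ => G p.1 p.2) := by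
    simp only [hG_def]
    apply Measurable.ennreal_ofReal
    exact (((hf.comp measurable_fst).sub (hf.comp measurable_snd)).pow_const 2).div
      ((measurable_fst.sub measurable_snd).pow_const 2)
  clear_value G
  have hI : (∫⁻ a : ℝ, ∫⁻ b, G a b) < ⊤ := by
    have hGx : ∀ a b : ℝ, ENNReal.ofReal ((f a - f b)^2 / (a - b)^2) = G a b :=
      fun a b => by rw [hG_def]
    simpa only [hGx] using hfin
  have hHm : Measurable (fun a : ℝ => ∫⁻ b, G a b) := hGm.lintegral_prod_right'
  have hKm : Measurable (fun b : ℝ => ∫⁻ a, G a b) := by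
    have : Measurable (fun p : ℝ × ℝ => G p.2 p.1) := hGm.comp measurable_swap
    exact this.lintegral_prod_right'
  have hK_fin : (∫⁻ b : ℝ, ∫⁻ a, G a b) < ⊤ := by
    have hswap := lintegral_lintegral_swap (μ := (volume : Measure ℝ))
      (ν := (volume : Measure ℝ)) (f := G) hGm.aemeasurable
    calc (∫⁻ b : ℝ, ∫⁻ a, G a b) = ∫⁻ a : ℝ, ∫⁻ b, G a b := hswap.symm
    _ < ⊤ := hI
  -- pointwise bound
  have ptw : ∀ l ∈ Ioi (0:ℝ),
      ENNReal.ofReal ((f (2*l) - f l)^2 / l)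
        ≤ 2 * ((∫⁻ b, G (2*l) b) + ∫⁻ a, G a l) := by
    intro l hl
    simp only [mem_Ioi] at hl
    have hlow : ∀ μ ∈ Ioo l (2*l),
        ENNReal.ofReal ((f (2*l) - f l)^2 / (2*l^2)) ≤ G (2*l) μ + G μ l := by
      intro μ hμ
      obtain ⟨h1, h2⟩ := hμ
      have hd1 : (0:ℝ) < (2*l - μ)^2 := by nlinarith
      have hd2 : (0:ℝ) < (μ - l)^2 := by nlinarith
      set a := f (2*l) - f μ with ha
      set b := f μ - f l with hb
      have hc : f (2*l) - f l = a + b := by rw [ha, hb]; ring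
      rw [hG_def]
      simp only
      rw [← ENNReal.ofReal_add (by positivity) (by positivity)]
      apply ENNReal.ofReal_le_ofReal
      have e1 : a^2 / l^2 ≤ a^2 / (2*l - μ)^2 := by
        rw [div_le_div_iff₀ (by positivity) hd1]
        have hle : (2*l - μ)^2 ≤ l^2 := by nlinarith
        exact mul_le_mul_of_nonneg_left hle (sq_nonneg a)
      have e2 : b^2 / l^2 ≤ b^2 / (μ - l)^2 := by
        rw [div_le_div_iff₀ (by positivity) hd2]
        have hle : (μ - l)^2 ≤ l^2 := by nlinarith
        exact mul_le_mul_of_nonneg_left hle (sq_nonneg b)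
      have e0 : (a+b)^2 / (2*l^2) ≤ a^2/l^2 + b^2/l^2 := by
        rw [div_add_div _ _ (by positivity) (by positivity),
          div_le_div_iff₀ (by positivity) (by positivity)]
        nlinarith [sq_nonneg (a - b), sq_nonneg l, sq_nonneg (a*l), sq_nonneg (b*l),
          sq_nonneg ((a-b)*l)]
      calc (f (2*l) - f l)^2 / (2*l^2) = (a+b)^2 / (2*l^2) := by rw [hc]
      _ ≤ a^2/l^2 + b^2/l^2 := e0
      _ ≤ a^2/(2*l-μ)^2 + b^2/(μ-l)^2 := add_le_add e1 e2
      _ = (f (2*l) - f μ)^2 / (2*l - μ)^2 + (f μ - f l)^2 / (μ - l)^2 := by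
            rw [ha, hb]
    have step1 : ENNReal.ofReal ((f (2*l) - f l)^2 / (2*l^2)) * ENNReal.ofReal l
        ≤ ∫⁻ μ in Ioo l (2*l), (G (2*l) μ + G μ l) := by
      have hvol : (volume (Ioo l (2*l))) = ENNReal.ofReal l := by
        rw [Real.volume_Ioo]; norm_num; ring_nf
      calc ENNReal.ofReal ((f (2*l) - f l)^2 / (2*l^2)) * ENNReal.ofReal l
          = ∫⁻ _ in Ioo l (2*l), ENNReal.ofReal ((f (2*l) - f l)^2 / (2*l^2)) := by
            rw [setLIntegral_const, hvol]
      _ ≤ ∫⁻ μ in Ioo l (2*l), (G (2*l) μ + G μ l) :=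
            setLIntegral_mono' measurableSet_Ioo hlow
    have step2 : (∫⁻ μ in Ioo l (2*l), (G (2*l) μ + G μ l))
        ≤ (∫⁻ b, G (2*l) b) + ∫⁻ a, G a l := by
      have hm1 : Measurable (fun μ : ℝ => G (2*l) μ) := by
        have h0 : Measurable (fun μ : ℝ => ((2*l : ℝ), μ)) :=
          measurable_const.prodMk measurable_id
        exact hGm.comp h0
      calc (∫⁻ μ in Ioo l (2*l), (G (2*l) μ + G μ l))
          ≤ ∫⁻ μ, (G (2*l) μ + G μ l) := setLIntegral_le_lintegral _ _
      _ = (∫⁻ μ, G (2*l) μ) + ∫⁻ μ, G μ l := lintegral_add_left hm1 _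
    have hkey : ENNReal.ofReal ((f (2*l) - f l)^2 / l)
        = 2 * (ENNReal.ofReal ((f (2*l) - f l)^2 / (2*l^2)) * ENNReal.ofReal l) := by
      rw [← ENNReal.ofReal_mul (by positivity),
        show (2 : ℝ≥0∞) = ENNReal.ofReal 2 by simp,
        ← ENNReal.ofReal_mul (by positivity)]
      congr 1
      have hl' : l ≠ 0 := ne_of_gt hl
      field_simp
    rw [hkey]
    gcongr
    exact le_trans step1 step2
  -- integrate the pointwise bound
  have hm2 : Measurable (fun l : ℝ => ∫⁻ b, G (2*l) b) :=
    hHm.comp (measurable_const_mul 2)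
  have hcomp : (∫⁻ l : ℝ, ∫⁻ b, G (2*l) b) < ⊤ := by
    have hmap : Measure.map (fun x : ℝ => 2*x) volume
        = ENNReal.ofReal |(2:ℝ)⁻¹| • volume := Real.map_volume_mul_left two_ne_zero
    have heq : (∫⁻ l : ℝ, ∫⁻ b, G (2*l) b)
        = ∫⁻ x, (∫⁻ b, G x b) ∂(Measure.map (fun x : ℝ => 2*x) volume) :=
      (lintegral_map hHm (measurable_const_mul 2)).symm
    rw [heq, hmap, lintegral_smul_measure]
    exact ENNReal.mul_lt_top ENNReal.ofReal_lt_top hI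
  calc (∫⁻ l in Ioi (0:ℝ), ENNReal.ofReal ((f (2 * l) - f l)^2 / l))
      ≤ ∫⁻ l in Ioi (0:ℝ), 2 * ((∫⁻ b, G (2*l) b) + ∫⁻ a, G a l) :=
        setLIntegral_mono' measurableSet_Ioi ptw
  _ ≤ ∫⁻ l : ℝ, 2 * ((∫⁻ b, G (2*l) b) + ∫⁻ a, G a l) := setLIntegral_le_lintegral _ _
  _ = 2 * ∫⁻ l : ℝ, ((∫⁻ b, G (2*l) b) + ∫⁻ a, G a l) :=
        lintegral_const_mul 2 (hm2.add hKm)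
  _ = 2 * ((∫⁻ l : ℝ, ∫⁻ b, G (2*l) b) + ∫⁻ l : ℝ, ∫⁻ a, G a l) := by
        rw [lintegral_add_left hm2]
  _ < ⊤ := by
        refine ENNReal.mul_lt_top (by norm_num) ?_
        exact ENNReal.add_lt_top.mpr ⟨hcomp, hK_fin⟩
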